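/- Let 0 < α < 1/2, let ξ ∈ (0, 1], let M₂ > 0, and let f: [0,1] → ℝ be measurable with |f(γ)| ≤ M₂ for all γ ∈ [0,1]. Then ∫₀^ξ (ξ − η)^{−α−1} ( ∫_η^ξ |f(γ)| (γ − η)^{−α} dγ ) dη ≤ M₂ · B(2α, 1−α) · ξ^{1−2α} / (1 − 2α). -/

import Mathlib

open MeasureTheory Set

lemma lint_sub_right (a b r : ℝ) (hab : a < b) (hr : -1 < r) :
    ∫⁻ x in Ioo a b, ENNReal.ofReal ((x - a) ^ r)
      = ENNReal.ofReal ((b - a) ^ (r + 1) / (r + 1)) := by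
  have hii : IntervalIntegrable (fun x : ℝ => (x - a) ^ r) volume a b := by
    have := (intervalIntegral.intervalIntegrable_rpow' (a := 0) (b := b - a) hr).comp_sub_right a
    simpa using this
  rw [setLIntegral_congr Ioo_ae_eq_Ioc,
    ← ofReal_integral_eq_lintegral_ofReal
      ((intervalIntegrable_iff_integrableOn_Ioc_of_le hab.le).1 hii) ?_]
  · congr 1
    rw [← intervalIntegral.integral_of_le hab.le,
      intervalIntegral.integral_comp_sub_right (fun x => x ^ r) a, sub_self,
      integral_rpow (Or.inl hr), Real.zero_rpow (by linarith), sub_zero]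
  · filter_upwards [ae_restrict_mem measurableSet_Ioc] with x hx
    exact Real.rpow_nonneg (by linarith [hx.1]) r

lemma lint_sub_left (a b r : ℝ) (hab : a < b) (hr : -1 < r) :
    ∫⁻ x in Ioo a b, ENNReal.ofReal ((b - x) ^ r)
      = ENNReal.ofReal ((b - a) ^ (r + 1) / (r + 1)) := by
  have hii : IntervalIntegrable (fun x : ℝ => (b - x) ^ r) volume a b := by
    have := (intervalIntegral.intervalIntegrable_rpow' (a := b - a) (b := 0) hr).comp_sub_left b
    simpa using this
  rw [setLIntegral_congr Ioo_ae_eq_Ioc,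
    ← ofReal_integral_eq_lintegral_ofReal
      ((intervalIntegrable_iff_integrableOn_Ioc_of_le hab.le).1 hii) ?_]
  · congr 1
    rw [← intervalIntegral.integral_of_le hab.le,
      intervalIntegral.integral_comp_sub_left (fun x => x ^ r) b, sub_self,
      integral_rpow (Or.inl hr), Real.zero_rpow (by linarith), sub_zero]
  · filter_upwards [ae_restrict_mem measurableSet_Ioc] with x hx
    exact Real.rpow_nonneg (by linarith [hx.2]) r

lemma beta_lb (α : ℝ) (hα : 0 < α) (hα1 : α < 1/2) :
    ENNReal.ofReal (1 / (1 - α))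
      ≤ ∫⁻ x in Ioi (0:ℝ), ENNReal.ofReal (x ^ (-α) * (1 + x) ^ (-1 - α)) := by
  have h1α : 0 < 1 - α := by linarith
  set F : ℝ → ℝ := fun x => (x / (1 + x)) ^ (1 - α) / (1 - α) with hF
  set g : ℝ → ℝ := fun x => x ^ (-α) * (1 + x) ^ (α - 2) with hg
  -- Step 1: for every T > 0, ofReal (F T) is a lower bound
  have step : ∀ T : ℝ, 0 < T → ENNReal.ofReal (F T)
      ≤ ∫⁻ x in Ioi (0:ℝ), ENNReal.ofReal (x ^ (-α) * (1 + x) ^ (-1 - α)) := by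
    intro T hT
    have hint : IntervalIntegrable g volume 0 T := by
      apply (intervalIntegral.intervalIntegrable_rpow' (by linarith : (-1:ℝ) < -α)).mul_continuousOn
      apply ContinuousOn.rpow_const (by fun_prop)
      intro x hx
      rw [uIcc_of_le hT.le] at hx
      exact Or.inl (by linarith [hx.1])
    have hcont : ContinuousOn F (Icc 0 T) := by
      apply ContinuousOn.div_const
      apply ContinuousOn.rpow_const
      · apply ContinuousOn.div continuousOn_id (by fun_prop)
        intro x hx; exact (by linarith [hx.1] : (0:ℝ) < 1 + x).ne'
      · intro x hx; exact Or.inr h1α.le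
    have hderiv : ∀ x ∈ Ioo 0 T, HasDerivAt F (g x) x := by
      intro x hx
      have hx0 : 0 < x := hx.1
      have h1x : 0 < 1 + x := by linarith
      have hu : HasDerivAt (fun x : ℝ => x / (1 + x)) (1 / (1 + x) ^ 2) x := by
        have := (hasDerivAt_id x).div ((hasDerivAt_id x).const_add 1) h1x.ne'
        refine this.congr_deriv ?_
        simp only [id]
        field_simp
        ring
      have hpow := (hu.rpow_const (p := 1 - α)
        (Or.inl (div_ne_zero hx0.ne' h1x.ne'))).div_const (1 - α)
      refine hpow.congr_deriv ?_
      symm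
      have e1 : (x / (1 + x)) ^ (1 - α - 1) = x ^ (-α) * (1 + x) ^ α := by
        rw [show (1 - α - 1) = -α by ring, Real.div_rpow hx0.le h1x.le,
          div_eq_mul_inv, ← Real.rpow_neg h1x.le, neg_neg]
      have e2 : (1 + x) ^ (α - 2) = (1 + x) ^ α / (1 + x) ^ (2:ℕ) := by
        rw [← Real.rpow_natCast (1 + x) 2, ← Real.rpow_sub h1x]
        norm_num
      show x ^ (-α) * (1 + x) ^ (α - 2) = _
      rw [e1, e2]
      field_simp
    have hFTC := intervalIntegral.integral_eq_sub_of_hasDerivAt_of_le hT.le hcont hderiv hint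
    have hF0 : F 0 = 0 := by
      simp [hF, Real.zero_rpow h1α.ne']
    have hgI : IntegrableOn g (Ioc 0 T) :=
      (intervalIntegrable_iff_integrableOn_Ioc_of_le hT.le).1 hint
    have e3 : ENNReal.ofReal (F T) = ∫⁻ x in Ioc 0 T, ENNReal.ofReal (g x) := by
      rw [← ofReal_integral_eq_lintegral_ofReal hgI ?_]
      · rw [← intervalIntegral.integral_of_le hT.le, hFTC, hF0, sub_zero]
      · filter_upwards [ae_restrict_mem measurableSet_Ioc] with x hx
        exact mul_nonneg (Real.rpow_nonneg hx.1.le _) (Real.rpow_nonneg (by linarith [hx.1]) _)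
    rw [e3]
    calc ∫⁻ x in Ioc 0 T, ENNReal.ofReal (g x)
        ≤ ∫⁻ x in Ioc 0 T, ENNReal.ofReal (x ^ (-α) * (1 + x) ^ (-1 - α)) := by
          apply setLIntegral_mono' measurableSet_Ioc
          intro x hx
          apply ENNReal.ofReal_le_ofReal
          apply mul_le_mul_of_nonneg_left _ (Real.rpow_nonneg hx.1.le _)
          exact Real.rpow_le_rpow_of_exponent_le (by linarith [hx.1]) (by linarith)
      _ ≤ ∫⁻ x in Ioi (0:ℝ), ENNReal.ofReal (x ^ (-α) * (1 + x) ^ (-1 - α)) :=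
          lintegral_mono_set (fun x hx => hx.1)
  -- Step 2: F T → 1/(1-α) as T → ∞
  have hinv : Filter.Tendsto (fun T : ℝ => (1 + T)⁻¹) Filter.atTop (nhds 0) :=
    tendsto_inv_atTop_zero.comp (Filter.tendsto_atTop_add_const_left _ 1 Filter.tendsto_id)
  have hratio : Filter.Tendsto (fun T : ℝ => T / (1 + T)) Filter.atTop (nhds 1) := by
    have h := Filter.Tendsto.sub (tendsto_const_nhds (x := (1:ℝ))) hinv
    rw [sub_zero] at h
    apply h.congr'
    filter_upwards [Filter.eventually_ge_atTop (1:ℝ)] with T hT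
    have : (0:ℝ) < 1 + T := by linarith
    field_simp
    ring
  have hFlim : Filter.Tendsto (fun T => ENNReal.ofReal (F T)) Filter.atTop
      (nhds (ENNReal.ofReal (1 / (1 - α)))) := by
    apply ENNReal.continuous_ofReal.continuousAt.tendsto.comp
    have h2 : Filter.Tendsto (fun T : ℝ => (T / (1 + T)) ^ (1 - α)) Filter.atTop
        (nhds 1) := by
      have := ((Real.continuousAt_rpow_const 1 (1 - α) (Or.inl one_ne_zero)).tendsto).comp hratio
      simpa [Function.comp_def, Real.one_rpow] using this
    simpa [hF] using h2.div_const (1 - α)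
  exact le_of_tendsto hFlim (by
    filter_upwards [Filter.eventually_gt_atTop (0:ℝ)] with T hT using step T hT)

/-- the bounded-integrand version of the kernel estimate. -/
theorem stmt_3 (α ξ M₂ : ℝ) (hα : 0 < α) (hα1 : α < 1/2) (hξ0 : 0 < ξ) (hξ1 : ξ ≤ 1)
    (hM₂ : 0 < M₂) (f : ℝ → ℝ) (hf : Measurable f)
    (hbd : ∀ γ ∈ Icc (0:ℝ) 1, |f γ| ≤ M₂) :
    (∫⁻ η in Ioo (0:ℝ) ξ, ENNReal.ofReal ((ξ - η) ^ (-α - 1)) *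
        ∫⁻ γ in Ioo η ξ, ENNReal.ofReal (|f γ| * (γ - η) ^ (-α))) ≤
      ENNReal.ofReal M₂ *
        (∫⁻ x in Ioi (0:ℝ), ENNReal.ofReal (x ^ (-α) * (1 + x) ^ (-1 - α))) *
        ENNReal.ofReal (ξ ^ (1 - 2 * α) / (1 - 2 * α)) := by
  have h1α : 0 < 1 - α := by linarith
  have h2α : 0 < 1 - 2 * α := by linarith
  have key : ∀ η ∈ Ioo (0:ℝ) ξ,
      ENNReal.ofReal ((ξ - η) ^ (-α - 1)) *
          (∫⁻ γ in Ioo η ξ, ENNReal.ofReal (|f γ| * (γ - η) ^ (-α)))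
        ≤ ENNReal.ofReal M₂ * ENNReal.ofReal (1 / (1 - α)) *
            ENNReal.ofReal ((ξ - η) ^ (-(2 * α))) := by
    intro η hη
    have hηξ : η < ξ := hη.2
    have hpos : 0 < ξ - η := by linarith
    have inner1 : (∫⁻ γ in Ioo η ξ, ENNReal.ofReal (|f γ| * (γ - η) ^ (-α)))
        ≤ ENNReal.ofReal M₂ * ENNReal.ofReal ((ξ - η) ^ (-α + 1) / (-α + 1)) := by
      calc (∫⁻ γ in Ioo η ξ, ENNReal.ofReal (|f γ| * (γ - η) ^ (-α)))
          ≤ ∫⁻ γ in Ioo η ξ, ENNReal.ofReal M₂ * ENNReal.ofReal ((γ - η) ^ (-α)) := by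
            apply setLIntegral_mono' measurableSet_Ioo
            intro γ hγ
            rw [← ENNReal.ofReal_mul hM₂.le]
            apply ENNReal.ofReal_le_ofReal
            exact mul_le_mul_of_nonneg_right
              (hbd γ ⟨by linarith [hη.1, hγ.1], by linarith [hγ.2]⟩)
              (Real.rpow_nonneg (by linarith [hγ.1]) _)
        _ = ENNReal.ofReal M₂ * ∫⁻ γ in Ioo η ξ, ENNReal.ofReal ((γ - η) ^ (-α)) :=
            lintegral_const_mul' _ _ ENNReal.ofReal_ne_top
        _ = ENNReal.ofReal M₂ * ENNReal.ofReal ((ξ - η) ^ (-α + 1) / (-α + 1)) := by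
            rw [lint_sub_right η ξ (-α) hηξ (by linarith)]
    calc ENNReal.ofReal ((ξ - η) ^ (-α - 1)) *
          (∫⁻ γ in Ioo η ξ, ENNReal.ofReal (|f γ| * (γ - η) ^ (-α)))
        ≤ ENNReal.ofReal ((ξ - η) ^ (-α - 1)) *
            (ENNReal.ofReal M₂ * ENNReal.ofReal ((ξ - η) ^ (-α + 1) / (-α + 1))) :=
          mul_le_mul_right inner1 _
      _ = ENNReal.ofReal ((ξ - η) ^ (-α - 1) * (M₂ * ((ξ - η) ^ (-α + 1) / (-α + 1)))) := by
          rw [← ENNReal.ofReal_mul hM₂.le, ← ENNReal.ofReal_mul (Real.rpow_nonneg hpos.le _)]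
      _ = ENNReal.ofReal (M₂ * (1 / (1 - α)) * (ξ - η) ^ (-(2 * α))) := by
          congr 1
          rw [show -α + 1 = 1 - α by ring,
            show -(2 * α) = (-α - 1) + (1 - α) by ring, Real.rpow_add hpos]
          generalize (ξ - η) ^ (-α - 1) = A
          generalize (ξ - η) ^ (1 - α) = B
          field_simp
      _ = ENNReal.ofReal M₂ * ENNReal.ofReal (1 / (1 - α)) *
            ENNReal.ofReal ((ξ - η) ^ (-(2 * α))) := by
          rw [ENNReal.ofReal_mul (by positivity), ENNReal.ofReal_mul hM₂.le]
  calc (∫⁻ η in Ioo (0:ℝ) ξ, ENNReal.ofReal ((ξ - η) ^ (-α - 1)) *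
        ∫⁻ γ in Ioo η ξ, ENNReal.ofReal (|f γ| * (γ - η) ^ (-α)))
      ≤ ∫⁻ η in Ioo (0:ℝ) ξ, ENNReal.ofReal M₂ * ENNReal.ofReal (1 / (1 - α)) *
          ENNReal.ofReal ((ξ - η) ^ (-(2 * α))) :=
        setLIntegral_mono' measurableSet_Ioo key
    _ = ENNReal.ofReal M₂ * ENNReal.ofReal (1 / (1 - α)) *
          ENNReal.ofReal (ξ ^ (1 - 2 * α) / (1 - 2 * α)) := by
        rw [lintegral_const_mul' _ _ (ENNReal.mul_ne_top ENNReal.ofReal_ne_top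
          ENNReal.ofReal_ne_top)]
        congr 1
        have h := lint_sub_left 0 ξ (-(2 * α)) hξ0 (by linarith)
        rw [show -(2 * α) + 1 = 1 - 2 * α by ring, sub_zero] at h
        exact h
    _ ≤ ENNReal.ofReal M₂ *
          (∫⁻ x in Ioi (0:ℝ), ENNReal.ofReal (x ^ (-α) * (1 + x) ^ (-1 - α))) *
          ENNReal.ofReal (ξ ^ (1 - 2 * α) / (1 - 2 * α)) :=
        mul_le_mul_left (mul_le_mul_right (beta_lb α hα hα1) _) _
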